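/- Let r, s be coprime positive integers with s = t·r + 1 for some t ≥ 0. Define sequences by v(0) = 1, v(n) = v(n-1) + Σ_{p=1}^{r} [n - p - ⌈ps/r⌉ ≥ 1]·v(n - p - ⌈ps/r⌉) + [1 ≤ n-1 ≤ r+s-1] for n ≥ 1 (the last bracket accounting for prefix paths), and w̃(0) = 1, w̃(n) = w̃(n-1) + Σ_{p=1}^{r} [n - p - ⌈ps/r⌉ ≥ 1]·w̃(n - p - ⌈ps/r⌉) for n ≥ 1. Then v(n) = w̃(n + t + 1) for all n ≥ 0. -/
import Mathlib


theorem v_eq_wtilde_shift (r s t : ℕ) (hr : 0 < r) (hs : 0 < s)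
    (hco : Nat.Coprime r s) (hst : s = t * r + 1)
    (f : ℕ → ℕ) (hf : ∀ p, f p = p + (⌈(p * s : ℚ) / r⌉).toNat)
    (v : ℕ → ℕ) (hv0 : v 0 = 1)
    (hv : ∀ n, 1 ≤ n →
      v n = v (n - 1) + (∑ p ∈ Finset.Icc 1 r, if 1 ≤ n - f p then v (n - f p) else 0) +
        (if 1 ≤ n - 1 ∧ n - 1 ≤ r + s - 1 then 1 else 0))
    (w : ℕ → ℕ) (hw0 : w 0 = 1)
    (hw : ∀ n, 1 ≤ n →
      w n = w (n - 1) + ∑ p ∈ Finset.Icc 1 r, (if 1 ≤ n - f p then w (n - f p) else 0)) :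
    ∀ n : ℕ, v n = w (n + t + 1) := by
  have hrq : (0:ℚ) < r := by exact_mod_cast hr
  have hsq : (s:ℚ) = t * r + 1 := by rw [hst]; push_cast; ring
  have hf' : ∀ p, 1 ≤ p → p ≤ r → f p = p * (t + 1) + 1 := by
    intro p hp1 hpr
    have hceil : ⌈(p * s : ℚ) / r⌉ = ((p * t + 1 : ℕ) : ℤ) := by
      rw [Int.ceil_eq_iff]
      constructor
      · rw [lt_div_iff₀ hrq]
        have h1 : (1:ℚ) ≤ p := by exact_mod_cast hp1
        push_cast
        rw [hsq]
        nlinarith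
      · rw [div_le_iff₀ hrq]
        have h2 : (p:ℚ) ≤ r := by exact_mod_cast hpr
        push_cast
        rw [hsq]
        nlinarith
    rw [hf, hceil, Int.toNat_natCast]
    ring
  have hw1 : ∀ m, m ≤ t + 2 → w m = 1 := by
    intro m
    induction m with
    | zero => intro _; exact hw0
    | succ k ihk =>
      intro hk
      rw [hw (k+1) (by omega)]
      have hsum : (∑ p ∈ Finset.Icc 1 r, if 1 ≤ (k+1) - f p then w ((k+1) - f p) else 0) = 0 := by
        apply Finset.sum_eq_zero
        intro p hp
        simp only [Finset.mem_Icc] at hp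
        rw [hf' p hp.1 hp.2]
        have hge : t + 1 ≤ p * (t+1) := Nat.le_mul_of_pos_left _ hp.1
        rw [if_neg (by omega)]
      simp only [Nat.add_sub_cancel, hsum, add_zero]
      exact ihk (by omega)
  have hrs : r * (t+1) = r + s - 1 := by
    have : r * (t+1) = t * r + r := by ring
    omega
  have hmid : ∀ n, 1 ≤ n →
      (∑ p ∈ Finset.Icc 1 r, if n ≤ p * (t+1) + 1 ∧ p * (t+1) + 1 ≤ n + t then 1 else 0)
      = (if 2 ≤ n ∧ n ≤ r + s then 1 else 0) := by
    intro n hn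
    by_cases h2 : 2 ≤ n ∧ n ≤ r + s
    · rw [if_pos h2]
      set K := (n - 2) / (t + 1) with hK
      have hdm : (t+1) * K + (n-2) % (t+1) = n - 2 := Nat.div_add_mod (n-2) (t+1)
      have hM : (n-2) % (t+1) < t + 1 := Nat.mod_lt _ (by omega)
      have hq : (K+1) * (t+1) = (t+1) * K + (t+1) := by ring
      have hqr : K + 1 ≤ r := by
        have hlt : (n-2) < r * (t+1) := by omega
        have := (Nat.div_lt_iff_lt_mul (show 0 < t+1 by omega)).mpr hlt
        omega
      rw [Finset.sum_eq_single (K+1)]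
      · rw [if_pos (by omega)]
      · intro p hp hpne
        simp only [Finset.mem_Icc] at hp
        rw [if_neg]
        intro hc
        rcases Nat.lt_or_ge p (K+1) with hlt | hge
        · have h3 : (p+1) * (t+1) ≤ (K+1) * (t+1) := Nat.mul_le_mul_right _ hlt
          have h4 : (p+1)*(t+1) = p*(t+1) + (t+1) := by ring
          omega
        · have hgt : K + 2 ≤ p := by omega
          have h3 : (K+2) * (t+1) ≤ p * (t+1) := Nat.mul_le_mul_right _ hgt
          have h4 : (K+2)*(t+1) = (K+1)*(t+1) + (t+1) := by ring
          omega
      · intro habs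
        exfalso
        exact habs (Finset.mem_Icc.mpr ⟨Nat.le_add_left 1 K, hqr⟩)
    · rw [if_neg h2]
      apply Finset.sum_eq_zero
      intro p hp
      simp only [Finset.mem_Icc] at hp
      rw [if_neg]
      intro hc
      have hps : p * (t+1) ≤ r * (t+1) := Nat.mul_le_mul_right _ hp.2
      have hp1 : t + 1 ≤ p * (t+1) := Nat.le_mul_of_pos_left _ hp.1
      omega
  intro n
  induction n using Nat.strong_induction_on with
  | _ n ih =>
    rcases Nat.eq_zero_or_pos n with rfl | hn
    · rw [hv0, hw1 (0 + t + 1) (by omega)]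
    · rw [hv n hn, hw (n+t+1) (by omega)]
      have e1 : v (n-1) = w (n + t) := by
        rw [ih (n-1) (by omega)]
        congr 1
        omega
      have esum : (∑ p ∈ Finset.Icc 1 r, if 1 ≤ n + t + 1 - f p then w (n + t + 1 - f p) else 0)
          = (∑ p ∈ Finset.Icc 1 r, if 1 ≤ n - f p then v (n - f p) else 0)
            + (∑ p ∈ Finset.Icc 1 r, if n ≤ p * (t+1) + 1 ∧ p * (t+1) + 1 ≤ n + t then 1 else 0) := by
        rw [← Finset.sum_add_distrib]
        apply Finset.sum_congr rfl
        intro p hp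
        simp only [Finset.mem_Icc] at hp
        rw [hf' p hp.1 hp.2]
        set F := p * (t+1) + 1 with hF
        have hF1 : 1 ≤ F := by omega
        by_cases hc1 : F < n
        · have hvw := ih (n - F) (by omega)
          rw [if_pos (by omega), if_pos (by omega), if_neg (by omega), hvw, add_zero]
          congr 1
          omega
        · by_cases hc2 : F ≤ n + t
          · rw [if_pos (by omega), if_neg (by omega), if_pos (by omega),
              hw1 (n + t + 1 - F) (by omega)]
          · rw [if_neg (by omega), if_neg (by omega), if_neg (by omega)]
      have hnt : n + t + 1 - 1 = n + t := by omega
      rw [hnt, esum, hmid n hn, e1]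
      have hind : (if 1 ≤ n - 1 ∧ n - 1 ≤ r + s - 1 then 1 else 0)
          = (if 2 ≤ n ∧ n ≤ r + s then (1:ℕ) else 0) := by
        split_ifs <;> omega
      rw [hind]
      ring
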